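/- Fix d ≥ 2, let μ be a Borel probability measure on [0,1] with mean p = ∫₀¹ λ dμ(λ) ∈ (0,1), and define the exchangeable Bernoulli pmf f(i) = ∫₀¹ λ^{i₁+⋯+i_d}·(1-λ)^{d-(i₁+⋯+i_d)} dμ(λ) for i ∈ {0,1}^d. Then for all u ∈ [0,1]^d, the corresponding GFGM copula satisfies C_f(u) = Σ_{i∈{0,1}^d} f(i)·Π_{m=1}^d ( u_m^{1/(1-p)} - i_m( u_m^{1/(1-p)} - u_m )/p ) = ∫₀¹ Π_{m=1}^d ( u_m^{1/(1-p)} - (λ/p)·( u_m^{1/(1-p)} - u_m ) ) dμ(λ). -/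

import Mathlib

open MeasureTheory ProbabilityTheory Set

/-- The real value (`0` or `1`) of a Bernoulli outcome. -/
noncomputable def bval (b : Bool) : ℝ := if b then 1 else 0

/-- De Finetti mixture construction of exchangeable GFGM copulas: if the exchangeable
Bernoulli pmf is `f(i) = ∫₀¹ λ^{#ones(i)} (1-λ)^{d - #ones(i)} dμ(λ)` for a mixing
probability measure `μ` on `[0,1]` with mean `p ∈ (0,1)`, then for all `u ∈ [0,1]^d` the
GFGM copula equals
`∫₀¹ Π_m (u_m^{1/(1-p)} - (λ/p)(u_m^{1/(1-p)} - u_m)) dμ(λ)`. -/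
theorem gfgm_exchangeable_mixture
    (d : ℕ) (hd : 2 ≤ d)
    (μ : Measure ℝ) [IsProbabilityMeasure μ] (hsupp : μ (Icc (0 : ℝ) 1) = 1)
    (p : ℝ) (hpdef : p = ∫ x, x ∂μ) (hp : p ∈ Ioo (0 : ℝ) 1)
    (f : (Fin d → Bool) → ℝ)
    (hf : ∀ i, f i = ∫ x,
      x ^ (Finset.univ.filter fun m => i m = true).card *
        (1 - x) ^ (d - (Finset.univ.filter fun m => i m = true).card) ∂μ)
    (u : Fin d → ℝ) (hu : ∀ m, u m ∈ Icc (0 : ℝ) 1) :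
    ∑ i : Fin d → Bool,
        f i * ∏ m, (u m ^ (1 - p)⁻¹ - bval (i m) * ((u m ^ (1 - p)⁻¹ - u m) / p))
      = ∫ x, ∏ m, (u m ^ (1 - p)⁻¹ - (x / p) * (u m ^ (1 - p)⁻¹ - u m)) ∂μ := by
  obtain ⟨hp0, hp1⟩ := hp
  have hμae : ∀ᵐ x ∂μ, x ∈ Icc (0:ℝ) 1 := by
    have hc : μ (Icc (0:ℝ) 1)ᶜ = 0 := by
      rw [measure_compl measurableSet_Icc (measure_ne_top μ _), hsupp, measure_univ]
      simp
    rw [ae_iff]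
    simpa [compl_def] using hc
  have hint : ∀ n m : ℕ, Integrable (fun x : ℝ => x ^ n * (1 - x) ^ m) μ := by
    intro n m
    refine Integrable.mono' (integrable_const 1)
      ((continuous_pow n).mul ((continuous_const.sub continuous_id).pow m)).aestronglyMeasurable ?_
    filter_upwards [hμae] with x hx
    have h1 : |x| ≤ 1 := abs_le.2 ⟨by linarith [hx.1], hx.2⟩
    have h2 : |1 - x| ≤ 1 := abs_le.2 ⟨by linarith [hx.2], by linarith [hx.1]⟩
    have := mul_le_one₀ (pow_le_one₀ (n := n) (abs_nonneg x) h1)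
      (pow_nonneg (abs_nonneg (1 - x)) m) (pow_le_one₀ (n := m) (abs_nonneg (1 - x)) h2)
    simpa [abs_mul, abs_pow] using this
  have key : ∀ x : ℝ,
      ∑ i : Fin d → Bool,
        (x ^ (Finset.univ.filter fun m => i m = true).card *
          (1 - x) ^ (d - (Finset.univ.filter fun m => i m = true).card)) *
        ∏ m, (u m ^ (1 - p)⁻¹ - bval (i m) * ((u m ^ (1 - p)⁻¹ - u m) / p))
      = ∏ m, (u m ^ (1 - p)⁻¹ - (x / p) * (u m ^ (1 - p)⁻¹ - u m)) := by
    intro x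
    have hfac : ∀ m : Fin d, (u m ^ (1 - p)⁻¹ - (x / p) * (u m ^ (1 - p)⁻¹ - u m))
        = ∑ b : Bool, (if b then x else 1 - x) *
            (u m ^ (1 - p)⁻¹ - bval b * ((u m ^ (1 - p)⁻¹ - u m) / p)) := by
      intro m
      simp only [Fintype.sum_bool, Bool.false_eq_true, eq_self_iff_true, if_true, if_false, bval]
      field_simp
      ring
    rw [Finset.prod_congr rfl (fun m _ => hfac m), Finset.prod_univ_sum,
      Fintype.piFinset_univ]
    refine (Finset.sum_congr rfl fun i _ => ?_).symm
    rw [Finset.prod_mul_distrib]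
    congr 1
    rw [Finset.prod_ite, Finset.prod_const, Finset.prod_const]
    congr 1
    rw [Finset.filter_not, Finset.card_sdiff_of_subset (Finset.filter_subset _ _),
      Finset.card_univ, Fintype.card_fin]
  calc ∑ i : Fin d → Bool,
        f i * ∏ m, (u m ^ (1 - p)⁻¹ - bval (i m) * ((u m ^ (1 - p)⁻¹ - u m) / p))
      = ∑ i : Fin d → Bool, ∫ x,
          (x ^ (Finset.univ.filter fun m => i m = true).card *
            (1 - x) ^ (d - (Finset.univ.filter fun m => i m = true).card)) *
          ∏ m, (u m ^ (1 - p)⁻¹ - bval (i m) * ((u m ^ (1 - p)⁻¹ - u m) / p)) ∂μ := by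
        refine Finset.sum_congr rfl fun i _ => ?_
        rw [hf i]
        exact (integral_mul_const _ _).symm
    _ = ∫ x, ∑ i : Fin d → Bool,
          (x ^ (Finset.univ.filter fun m => i m = true).card *
            (1 - x) ^ (d - (Finset.univ.filter fun m => i m = true).card)) *
          ∏ m, (u m ^ (1 - p)⁻¹ - bval (i m) * ((u m ^ (1 - p)⁻¹ - u m) / p)) ∂μ :=
        (integral_finset_sum _ fun i _ => (hint _ _).mul_const _).symm
    _ = ∫ x, ∏ m, (u m ^ (1 - p)⁻¹ - (x / p) * (u m ^ (1 - p)⁻¹ - u m)) ∂μ := by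
        exact integral_congr_ae (Filter.Eventually.of_forall fun x => key x)
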